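/- The head-ordered dependency projection is invariant under collapsing unary proper nodes: for every c-tree C, the head-ordered dependency projection of C equals the head-ordered dependency projection of the unaryless c-tree obtained from C by deleting every unary proper node (attaching its unique child directly to its parent). -/

import Mathlib

/-- A node of a constituent tree: either a pre-terminal over position `i`
(standing for the pre-terminal `(p_i, i, {i})` together with its leaf child `i`),
or a proper node `node Z h cs` with label `Z`, lexical head `h` and children `cs`. -/
inductive CNode (L : ℕ) (Sg : Type) : Type where
  | pre  : Fin L → CNode L Sg
  | node : Sg → Fin L → List (CNode L Sg) → CNode L Sg

namespace CNode

variable {L : ℕ} {Sg : Type}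

/-- The lexical head of a node. -/
def head : CNode L Sg → Fin L
  | pre i => i
  | node _ h _ => h

mutual
  /-- The yield of a node. -/
  def yield : CNode L Sg → Finset (Fin L)
    | pre i => {i}
    | node _ _ cs => yieldList cs
  def yieldList : List (CNode L Sg) → Finset (Fin L)
    | [] => ∅
    | c :: cs => yield c ∪ yieldList cs
end

mutual
  /-- The list of all subtrees (nodes) of a tree, including itself. -/
  def subs : CNode L Sg → List (CNode L Sg)
    | pre i => [pre i]
    | node Z h cs => node Z h cs :: subsList cs
  def subsList : List (CNode L Sg) → List (CNode L Sg)
    | [] => []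
    | c :: cs => subs c ++ subsList cs
end

/-- Well-formedness of a c-tree: children have pairwise disjoint yields and
every proper node has exactly one child whose head is the node's head. -/
inductive Valid : CNode L Sg → Prop where
  | pre (i : Fin L) : Valid (pre i)
  | node (Z : Sg) (h : Fin L) (cs : List (CNode L Sg)) :
      (∀ c ∈ cs, Valid c) →
      cs.Pairwise (fun a b => Disjoint a.yield b.yield) →
      (∃! c, c ∈ cs ∧ head c = h) →
      Valid (node Z h cs)

/-- A c-tree on positions `1,…,L`: a well-formed tree whose leaves are exactly
the `L` positions, each appearing exactly once. -/
def IsCTree (t : CNode L Sg) : Prop := Valid t ∧ t.yield = Finset.univ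

/-- Every proper node has exactly two children. -/
def Binary (t : CNode L Sg) : Prop :=
  ∀ s ∈ t.subs, ∀ Z h cs, s = node Z h cs → cs.length = 2

/-- No proper node has exactly one child. -/
def Unaryless (t : CNode L Sg) : Prop :=
  ∀ s ∈ t.subs, ∀ Z h cs, s = node Z h cs → cs.length ≠ 1

/-- Every node's yield is an interval of consecutive positions. -/
def Continuous (t : CNode L Sg) : Prop :=
  ∀ s ∈ t.subs, ∃ a b : Fin L, s.yield = Finset.Icc a b

/-- `AttachesAt C h m Z n`: `n` is a proper node of `C` with label `Z` and lexical
head `h`, having a (non-head) child whose lexical head is `m ≠ h`;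
i.e. the modifier `m` attaches to `h` at the spine node `n`, generating an arc
`(h, m)` labeled `Z`. -/
def AttachesAt (C : CNode L Sg) (h m : Fin L) (Z : Sg) (n : CNode L Sg) : Prop :=
  n ∈ C.subs ∧ ∃ cs, n = node Z h cs ∧ m ≠ h ∧ ∃ c ∈ cs, head c = m

/-- A proper node with head `h` having at least one non-head child
(i.e. a node of `h`'s spine at which some modifier attaches). -/
def attachB (h : Fin L) : CNode L Sg → Bool
  | pre _ => false
  | node _ h' cs => h' = h && cs.any (fun c => head c != h)

/-- The position, counted from the bottom of the spine of `h`, of the spine node `n`: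
the number of proper nodes with head `h` lying weakly below `n` at which modifiers
attach.  This is the order index (`#1, #2, …`) of the attachment event at `n`. -/
def spineIdx (h : Fin L) (n : CNode L Sg) : ℕ :=
  n.subs.countP (attachB h)

end CNode

/-- An ordered, labeled dependency tree on positions `{1,…,L}` with labels in `Sg`:
`par m = some (h, ℓ, j)` means there is an arc from head `h` to modifier `m`,
carrying label `ℓ` and order index `j` (the position of the attachment event of `m`
in the order of `h`'s modifiers). -/
structure ODTree (L : ℕ) (Sg : Type) : Type where
  root : Fin L
  par : Fin L → Option (Fin L × Sg × ℕ)
  root_par : par root = none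
  reach : ∀ v : Fin L, Relation.ReflTransGen (fun a b => (par b).map (·.1) = some a) root v

namespace ODTree

variable {L : ℕ} {Sg : Type}

/-- The arc relation: `h` is the head of `m`. -/
def arc (D : ODTree L Sg) (h m : Fin L) : Prop := (D.par m).map (·.1) = some h

/-- `D` is a weakly ordered d-tree: for each head, the order indices of its modifiers
are exactly `1, …, J` for some `J` (so they canonically encode a total preorder, i.e.
weak order, on the modifiers), and equivalent modifiers (same index) carry the same
label. -/
def WeaklyOrdered (D : ODTree L Sg) : Prop :=
  (∀ m h ℓ j, D.par m = some (h, ℓ, j) →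
     1 ≤ j ∧ ∀ k, 1 ≤ k → k < j → ∃ m' ℓ', D.par m' = some (h, ℓ', k)) ∧
  (∀ m m' h ℓ ℓ' j, D.par m = some (h, ℓ, j) → D.par m' = some (h, ℓ', j) → ℓ = ℓ')

/-- `D` is a strictly ordered d-tree: additionally, no two modifiers of the same head
share an index, so the indices encode a strict total order on the modifiers. -/
def StrictlyOrdered (D : ODTree L Sg) : Prop :=
  WeaklyOrdered D ∧
  ∀ m m' h ℓ ℓ' j, D.par m = some (h, ℓ, j) → D.par m' = some (h, ℓ', j) → m = m'

/-- Projectivity: for every arc `(h,m)`, every position strictly between `h` and `m`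
is reachable from `h` by a directed path. -/
def Projective (D : ODTree L Sg) : Prop :=
  ∀ h m, D.arc h m → ∀ d : Fin L, min h m < d → d < max h m →
    Relation.ReflTransGen D.arc h d

/-- The nesting property (for weak orders): closer modifiers on the same side of the
head are attached first, i.e. `h < m < m'` or `h > m > m'` implies `m ≺_h m'` or
`m ≡_h m'`, i.e. the index of `m` is at most that of `m'`. -/
def Nested (D : ODTree L Sg) : Prop :=
  ∀ (h m m' : Fin L) (ℓ ℓ' : Sg) (j j' : ℕ),
    D.par m = some (h, ℓ, j) → D.par m' = some (h, ℓ', j') →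
    ((h < m ∧ m < m') ∨ (m' < m ∧ m < h)) → j ≤ j'

/-- The nesting property for strict orders: `h < m < m'` or `h > m > m'` implies
`m ≺_h m'`, i.e. the index of `m` is strictly smaller than that of `m'`. -/
def NestedStrict (D : ODTree L Sg) : Prop :=
  ∀ (h m m' : Fin L) (ℓ ℓ' : Sg) (j j' : ℕ),
    D.par m = some (h, ℓ, j) → D.par m' = some (h, ℓ', j') →
    ((h < m ∧ m < m') ∨ (m' < m ∧ m < h)) → j < j'

end ODTree

/-- `D` is the head-ordered dependency projection of the c-tree `C`:
`D` has an arc `(h, m)` with label `Z` and order index `j` exactly when some proper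
node `n` of `C` with label `Z` and head `h` has a non-head child headed `m`, and `j`
is the position of `n` among the attachment nodes of `h`'s spine, counted from the
bottom (so modifiers attaching at lower spine nodes get smaller indices, and
modifiers attaching at the same spine node get the same index). -/
def IsProjection {L : ℕ} {Sg : Type} (C : CNode L Sg) (D : ODTree L Sg) : Prop :=
  ∀ (h m : Fin L) (ℓ : Sg) (j : ℕ),
    D.par m = some (h, ℓ, j) ↔ ∃ n, CNode.AttachesAt C h m ℓ n ∧ j = CNode.spineIdx h n

namespace CNode

variable {L : ℕ} {Sg : Type}

mutual
  /-- Delete every unary proper node, attaching its unique child directly to its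
  parent (a unary proper node `node Z h [c]` is replaced by the collapse of `c`). -/
  def collapse : CNode L Sg → CNode L Sg
    | pre i => pre i
    | node _ _ [c] => collapse c
    | node Z h cs => node Z h (collapseList cs)
  def collapseList : List (CNode L Sg) → List (CNode L Sg)
    | [] => []
    | c :: cs => collapse c :: collapseList cs
end

end CNode

namespace CNode

variable {L : ℕ} {Sg : Type}

theorem collapseList_eq_map : ∀ cs : List (CNode L Sg), collapseList cs = cs.map collapse
  | [] => rfl
  | c :: cs => by rw [collapseList, List.map_cons, collapseList_eq_map]

theorem collapse_node_of_len (Z : Sg) (h : Fin L) (cs : List (CNode L Sg))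
    (hcs : cs.length ≠ 1) : collapse (node Z h cs) = node Z h (collapseList cs) := by
  match cs with
  | [] => rfl
  | [c] => exact absurd rfl hcs
  | a :: b :: t => rfl

theorem self_mem_subs : ∀ t : CNode L Sg, t ∈ t.subs
  | pre i => by simp [subs]
  | node Z h cs => by simp [subs]

theorem subsList_cons (c : CNode L Sg) (cs : List (CNode L Sg)) :
    subsList (c :: cs) = subs c ++ subsList cs := rfl

theorem subs_node (Z : Sg) (h : Fin L) (cs : List (CNode L Sg)) :
    subs (node Z h cs) = node Z h cs :: subsList cs := rfl

mutual
theorem subs_subset_of_mem : ∀ t n : CNode L Sg, n ∈ t.subs → ∀ x ∈ n.subs, x ∈ t.subs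
  | pre i, n, hn, x, hx => by
    simp [subs] at hn; subst hn; exact hx
  | node Z h cs, n, hn, x, hx => by
    rw [subs_node] at hn ⊢
    rcases List.mem_cons.mp hn with rfl | hn
    · exact hx
    · exact List.mem_cons_of_mem _ (subsList_subset_of_mem cs n hn x hx)
theorem subsList_subset_of_mem : ∀ (cs : List (CNode L Sg)) (n : CNode L Sg),
    n ∈ subsList cs → ∀ x ∈ n.subs, x ∈ subsList cs
  | c :: cs, n, hn, x, hx => by
    rw [subsList_cons] at hn ⊢
    rcases List.mem_append.mp hn with hn | hn
    · exact List.mem_append_left _ (subs_subset_of_mem c n hn x hx)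
    · exact List.mem_append_right _ (subsList_subset_of_mem cs n hn x hx)
end

mutual
theorem valid_of_mem_subs : ∀ t : CNode L Sg, Valid t → ∀ n ∈ t.subs, Valid n
  | pre i, hv, n, hn => by
    simp [subs] at hn; subst hn; exact hv
  | node Z h cs, hv, n, hn => by
    rw [subs_node] at hn
    rcases List.mem_cons.mp hn with rfl | hn
    · exact hv
    · cases hv with
      | node _ _ _ hval _ _ => exact valid_of_mem_subsList cs hval n hn
theorem valid_of_mem_subsList : ∀ cs : List (CNode L Sg), (∀ c ∈ cs, Valid c) →
    ∀ n ∈ subsList cs, Valid n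
  | c :: cs, hval, n, hn => by
    rw [subsList_cons] at hn
    rcases List.mem_append.mp hn with hn | hn
    · exact valid_of_mem_subs c (hval c (List.mem_cons_self)) n hn
    · exact valid_of_mem_subsList cs (fun x hx => hval x (List.mem_cons_of_mem _ hx)) n hn
end

theorem head_child_of_unary {Z : Sg} {h : Fin L} {c : CNode L Sg}
    (hv : Valid (node Z h [c])) : head c = h := by
  cases hv with
  | node _ _ _ _ _ huniq =>
    obtain ⟨c', ⟨hc', hh'⟩, _⟩ := huniq
    simp at hc'; subst hc'; exact hh'

theorem head_collapse : ∀ t : CNode L Sg, Valid t → head (collapse t) = head t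
  | pre i, _ => rfl
  | node Z h [c], hv => by
    have hc : Valid c := by
      cases hv with
      | node _ _ _ hval _ _ => exact hval c (List.mem_cons_self)
    show head (collapse c) = h
    rw [head_collapse c hc, head_child_of_unary hv]
  | node Z h [], _ => rfl
  | node Z h (a :: b :: t), _ => rfl

theorem any_collapseList (h0 : Fin L) : ∀ cs : List (CNode L Sg), (∀ c ∈ cs, Valid c) →
    (collapseList cs).any (fun c => head c != h0) = cs.any (fun c => head c != h0)
  | [], _ => rfl
  | c :: cs, hval => by
    rw [collapseList, List.any_cons, List.any_cons,
      head_collapse c (hval c (List.mem_cons_self)),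
      any_collapseList h0 cs (fun x hx => hval x (List.mem_cons_of_mem _ hx))]

theorem attachB_collapse (h0 : Fin L) (Z : Sg) (h : Fin L) (cs : List (CNode L Sg))
    (hval : ∀ c ∈ cs, Valid c) :
    attachB h0 (node Z h (collapseList cs)) = attachB h0 (node Z h cs) := by
  simp only [attachB, any_collapseList h0 cs hval]

theorem attachB_unary (h0 : Fin L) {Z : Sg} {h : Fin L} {c : CNode L Sg}
    (hv : Valid (node Z h [c])) : attachB h0 (node Z h [c]) = false := by
  have hc := head_child_of_unary hv
  simp only [attachB, List.any_cons, List.any_nil, Bool.or_false]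
  by_cases hh : h = h0
  · subst hh; simp [hc]
  · simp [hh]

mutual
theorem countP_subs_collapse (h0 : Fin L) : ∀ t : CNode L Sg, Valid t →
    (collapse t).subs.countP (attachB h0) = t.subs.countP (attachB h0)
  | pre i, _ => rfl
  | node Z h [c], hv => by
    have hc : Valid c := by
      cases hv with
      | node _ _ _ hval _ _ => exact hval c (List.mem_cons_self)
    show (collapse c).subs.countP (attachB h0) = _
    rw [countP_subs_collapse h0 c hc, subs_node, List.countP_cons, attachB_unary h0 hv]
    simp [subsList_cons, subsList]
  | node Z h [], hv => by
    simp [collapse, subs, subsList, collapseList]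
  | node Z h (a :: b :: t), hv => by
    have hval : ∀ c ∈ a :: b :: t, Valid c := by
      cases hv with
      | node _ _ _ hval _ _ => exact hval
    have h1 : collapse (node Z h (a :: b :: t)) =
        node Z h (collapseList (a :: b :: t)) := rfl
    rw [h1, subs_node, subs_node, List.countP_cons, List.countP_cons,
      attachB_collapse h0 Z h _ hval, countP_subsList_collapse h0 _ hval]
theorem countP_subsList_collapse (h0 : Fin L) : ∀ cs : List (CNode L Sg),
    (∀ c ∈ cs, Valid c) →
    (subsList (collapseList cs)).countP (attachB h0) = (subsList cs).countP (attachB h0)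
  | [], _ => rfl
  | c :: cs, hval => by
    rw [collapseList, subsList_cons, subsList_cons, List.countP_append, List.countP_append,
      countP_subs_collapse h0 c (hval c (List.mem_cons_self)),
      countP_subsList_collapse h0 cs (fun x hx => hval x (List.mem_cons_of_mem _ hx))]
end

theorem spineIdx_collapse (h0 : Fin L) (t : CNode L Sg) (hv : Valid t) :
    spineIdx h0 (collapse t) = spineIdx h0 t :=
  countP_subs_collapse h0 t hv

mutual
theorem collapse_mem_subs : ∀ t n : CNode L Sg, n ∈ t.subs → collapse n ∈ (collapse t).subs
  | pre i, n, hn => by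
    simp [subs] at hn; subst hn; simp [collapse, subs]
  | node Z h [c], n, hn => by
    rw [subs_node] at hn
    show collapse n ∈ (collapse c).subs
    rcases List.mem_cons.mp hn with rfl | hn
    · show collapse c ∈ _
      exact self_mem_subs _
    · rw [subsList_cons] at hn
      simp only [subsList, List.append_nil] at hn
      exact collapse_mem_subs c n hn
  | node Z h [], n, hn => by
    rw [subs_node] at hn
    simp only [subsList] at hn
    simp at hn; subst hn
    exact self_mem_subs _
  | node Z h (a :: b :: t), n, hn => by
    rw [subs_node] at hn
    have h1 : collapse (node Z h (a :: b :: t)) =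
        node Z h (collapseList (a :: b :: t)) := rfl
    rw [h1, subs_node]
    rcases List.mem_cons.mp hn with rfl | hn
    · exact List.mem_cons_self
    · exact List.mem_cons_of_mem _ (collapse_mem_subsList _ n hn)
theorem collapse_mem_subsList : ∀ (cs : List (CNode L Sg)) (n : CNode L Sg),
    n ∈ subsList cs → collapse n ∈ subsList (collapseList cs)
  | c :: cs, n, hn => by
    rw [subsList_cons] at hn
    rw [collapseList, subsList_cons]
    rcases List.mem_append.mp hn with hn | hn
    · exact List.mem_append_left _ (collapse_mem_subs c n hn)
    · exact List.mem_append_right _ (collapse_mem_subsList cs n hn)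
end

mutual
theorem subs_collapse_surj : ∀ (t : CNode L Sg) (n' : CNode L Sg),
    n' ∈ (collapse t).subs → ∃ n ∈ t.subs, collapse n = n'
  | pre i, n', hn' => by
    simp [collapse, subs] at hn'; subst hn'
    exact ⟨pre i, self_mem_subs _, rfl⟩
  | node Z h [c], n', hn' => by
    have hn'' : n' ∈ (collapse c).subs := hn'
    obtain ⟨n, hn, hcn⟩ := subs_collapse_surj c n' hn''
    refine ⟨n, ?_, hcn⟩
    rw [subs_node, subsList_cons]
    simp only [subsList, List.append_nil]
    exact List.mem_cons_of_mem _ hn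
  | node Z h [], n', hn' => by
    have h1 : collapse (node Z h ([] : List (CNode L Sg))) = node Z h [] := rfl
    rw [h1] at hn'
    rw [subs_node] at hn'
    simp only [subsList] at hn'
    simp at hn'; subst hn'
    exact ⟨node Z h [], self_mem_subs _, rfl⟩
  | node Z h (a :: b :: t), n', hn' => by
    have h1 : collapse (node Z h (a :: b :: t)) =
        node Z h (collapseList (a :: b :: t)) := rfl
    rw [h1, subs_node] at hn'
    rcases List.mem_cons.mp hn' with rfl | hn'
    · exact ⟨node Z h (a :: b :: t), self_mem_subs _, h1.symm⟩
    · obtain ⟨n, hn, hcn⟩ := subsList_collapse_surj _ n' hn'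
      exact ⟨n, List.mem_cons_of_mem _ hn, hcn⟩
theorem subsList_collapse_surj : ∀ (cs : List (CNode L Sg)) (n' : CNode L Sg),
    n' ∈ subsList (collapseList cs) → ∃ n ∈ subsList cs, collapse n = n'
  | c :: cs, n', hn' => by
    rw [collapseList, subsList_cons] at hn'
    rcases List.mem_append.mp hn' with hn' | hn'
    · obtain ⟨n, hn, hcn⟩ := subs_collapse_surj c n' hn'
      exact ⟨n, by rw [subsList_cons]; exact List.mem_append_left _ hn, hcn⟩
    · obtain ⟨n, hn, hcn⟩ := subsList_collapse_surj cs n' hn'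
      exact ⟨n, by rw [subsList_cons]; exact List.mem_append_right _ hn, hcn⟩
end

theorem collapse_eq_node : ∀ (t : CNode L Sg) (Z : Sg) (h : Fin L)
    (cs' : List (CNode L Sg)), Valid t → collapse t = node Z h cs' →
    ∃ cs, node Z h cs ∈ t.subs ∧ collapseList cs = cs' ∧
      collapse (node Z h cs) = node Z h cs'
  | pre i, Z, h, cs', _, heq => by simp [collapse] at heq
  | node Z0 h0 [c], Z, h, cs', hv, heq => by
    have hc : Valid c := by
      cases hv with
      | node _ _ _ hval _ _ => exact hval c (List.mem_cons_self)
    have heq' : collapse c = node Z h cs' := heq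
    obtain ⟨cs, hmem, hcl, hcol⟩ := collapse_eq_node c Z h cs' hc heq'
    refine ⟨cs, ?_, hcl, hcol⟩
    rw [subs_node, subsList_cons]
    simp only [subsList, List.append_nil]
    exact List.mem_cons_of_mem _ hmem
  | node Z0 h0 [], Z, h, cs', _, heq => by
    have h1 : collapse (node Z0 h0 ([] : List (CNode L Sg))) = node Z0 h0 [] := rfl
    rw [h1] at heq
    injection heq with e1 e2 e3
    subst e1; subst e2; subst e3
    exact ⟨[], self_mem_subs _, rfl, rfl⟩
  | node Z0 h0 (a :: b :: t), Z, h, cs', _, heq => by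
    have h1 : collapse (node Z0 h0 (a :: b :: t)) =
        node Z0 h0 (collapseList (a :: b :: t)) := rfl
    rw [h1] at heq
    injection heq with e1 e2 e3
    subst e1; subst e2
    exact ⟨a :: b :: t, self_mem_subs _, e3, by rw [h1, e3]⟩

theorem attach_iff (C : CNode L Sg) (hC : Valid C) (h m : Fin L) (ℓ : Sg) (j : ℕ) :
    (∃ n, AttachesAt C h m ℓ n ∧ j = spineIdx h n) ↔
    (∃ n, AttachesAt (collapse C) h m ℓ n ∧ j = spineIdx h n) := by
  constructor
  · rintro ⟨n, ⟨hmem, cs, rfl, hmh, c, hc, hhead⟩, rfl⟩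
    have hvn : Valid (node ℓ h cs) := valid_of_mem_subs C hC _ hmem
    have hcv : Valid c := by
      cases hvn with
      | node _ _ _ hval _ _ => exact hval c hc
    have hval : ∀ x ∈ cs, Valid x := by
      cases hvn with
      | node _ _ _ hval _ _ => exact hval
    have hlen : cs.length ≠ 1 := by
      intro hlen1
      match cs, hlen1 with
      | [x], _ =>
        have hx : head x = h := head_child_of_unary hvn
        simp at hc; subst hc
        exact hmh (hhead ▸ hx ▸ rfl)
    have hcol : collapse (node ℓ h cs) = node ℓ h (collapseList cs) :=
      collapse_node_of_len ℓ h cs hlen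
    refine ⟨collapse (node ℓ h cs), ⟨collapse_mem_subs C _ hmem, collapseList cs, hcol,
      hmh, collapse c, ?_, ?_⟩, ?_⟩
    · rw [collapseList_eq_map]; exact List.mem_map_of_mem hc
    · rw [head_collapse c hcv, hhead]
    · exact (spineIdx_collapse h _ hvn).symm
  · rintro ⟨n', ⟨hmem', cs', rfl, hmh, c', hc', hhead'⟩, rfl⟩
    obtain ⟨n, hn, hcn⟩ := subs_collapse_surj C _ hmem'
    have hvn : Valid n := valid_of_mem_subs C hC n hn
    obtain ⟨cs, hmem, hcl, hcol⟩ := collapse_eq_node n ℓ h cs' hvn hcn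
    have hmemC : node ℓ h cs ∈ C.subs := subs_subset_of_mem C n hn _ hmem
    have hvnode : Valid (node ℓ h cs) := valid_of_mem_subs C hC _ hmemC
    have hval : ∀ x ∈ cs, Valid x := by
      cases hvnode with
      | node _ _ _ hval _ _ => exact hval
    rw [← hcl, collapseList_eq_map] at hc'
    obtain ⟨c, hc, rfl⟩ := List.mem_map.mp hc'
    have hhc : head c = m := by rw [← head_collapse c (hval c hc)]; exact hhead'
    refine ⟨node ℓ h cs, ⟨hmemC, cs, rfl, hmh, c, hc, hhc⟩, ?_⟩
    have := spineIdx_collapse h (node ℓ h cs) hvnode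
    rw [hcol] at this
    exact this

end CNode

/-- The head-ordered dependency projection is invariant under
collapsing unary proper nodes: for every c-tree `C`, the head-ordered dependency
projection of `C` equals the head-ordered dependency projection of the unaryless
c-tree obtained from `C` by deleting every unary proper node. -/
theorem stmt9 (L : ℕ) (Sg P : Type) [Fintype Sg] (pos : Fin L → P)
    (C : CNode L Sg) (hC : CNode.IsCTree C) :
    ∀ D : ODTree L Sg, IsProjection C D ↔ IsProjection C.collapse D := by
  intro D
  constructor
  · intro H h m ℓ j
    exact (H h m ℓ j).trans (CNode.attach_iff C hC.1 h m ℓ j)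
  · intro H h m ℓ j
    exact (H h m ℓ j).trans (CNode.attach_iff C hC.1 h m ℓ j).symm
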